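/- Let Φ_i(x) = (1+x) P_i^{(0,3)}(x) for 0 ≤ i ≤ N−1 and Φ_N(x) = P_N^{(0,2)}(x). Then the family {Φ_i}_{i=0}^N is orthogonal in the weighted inner product (u,v) ↦ ∫_{−1}^1 u(x) v(x) (1+x) dx, with ‖Φ_i‖² = 8/(i+2) for i ≤ N−1 and ‖Φ_N‖² = 2. -/

import Mathlib

open Finset Real

/-- The classical Jacobi polynomial `P_n^{(a,b)}`, defined via its expansion
around `x = 1`. -/
noncomputable def jacobiP (a b : ℝ) (n : ℕ) : Polynomial ℝ :=
  Polynomial.C (Real.Gamma ((n : ℝ) + a + 1) /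
      ((n.factorial : ℝ) * Real.Gamma ((n : ℝ) + a + b + 1))) *
    ∑ k ∈ Finset.range (n + 1),
      Polynomial.C ((n.choose k : ℝ) * Real.Gamma ((n : ℝ) + (k : ℝ) + a + b + 1)
          / (2 ^ k * Real.Gamma ((k : ℝ) + a + 1))) *
        (Polynomial.X - 1) ^ k

/-- The basis `Φ_i = (1+x) P_i^{(0,3)}` for `i ≤ N−1`, `Φ_N = P_N^{(0,2)}`. -/
noncomputable def Phi (N i : ℕ) : Polynomial ℝ :=
  if i = N then jacobiP 0 2 N else (Polynomial.X + 1) * jacobiP 0 3 i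

lemma alt_pascal (n : ℕ) (g : ℕ → ℝ) :
    ∑ k ∈ range (n + 2), (-1 : ℝ) ^ k * ((n + 1).choose k) * g k
      = ∑ k ∈ range (n + 1), (-1 : ℝ) ^ k * (n.choose k) * g k
        - ∑ k ∈ range (n + 1), (-1 : ℝ) ^ k * (n.choose k) * g (k + 1) := by
  rw [Finset.sum_range_succ' (fun k => (-1 : ℝ) ^ k * ((n + 1).choose k) * g k) (n+1)]
  have h1 : ∀ k, ((n + 1).choose (k + 1) : ℝ) = (n.choose k : ℝ) + (n.choose (k+1) : ℝ) := by
    intro k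
    rw [Nat.choose_succ_succ]
    push_cast
    ring
  have h2 : ∑ k ∈ range (n + 1), (-1:ℝ) ^ (k+1) * ((n + 1).choose (k+1)) * g (k+1)
      = (∑ k ∈ range (n + 1), ((-1:ℝ)^(k+1) * (n.choose k) * g (k+1)))
        + ∑ k ∈ range (n + 1), ((-1:ℝ)^(k+1) * (n.choose (k+1)) * g (k+1)) := by
    rw [← Finset.sum_add_distrib]
    apply Finset.sum_congr rfl
    intro k _
    rw [h1]; ring
  rw [h2]
  have h3 : ∑ k ∈ range (n + 1), ((-1:ℝ)^(k+1) * (n.choose (k+1)) * g (k+1))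
      = ∑ k ∈ range (n + 1), (-1:ℝ)^k * (n.choose k) * g k - g 0 := by
    rw [Finset.sum_range_succ' (fun k => (-1 : ℝ) ^ k * (n.choose k) * g k) n]
    have : ∑ k ∈ range n, ((-1:ℝ)^(k+1) * (n.choose (k+1)) * g (k+1))
        = ∑ k ∈ range (n+1), ((-1:ℝ)^(k+1) * (n.choose (k+1)) * g (k+1)) := by
      rw [Finset.sum_range_succ, Nat.choose_succ_self]
      simp
    rw [← this]
    simp
  rw [h3]
  have h4 : ∑ x ∈ range (n+1), (-1:ℝ)^(x+1)*(n.choose x)*g (x+1)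
      = -∑ x ∈ range (n+1), (-1:ℝ)^x*(n.choose x)*g (x+1) := by
    rw [← Finset.sum_neg_distrib]
    apply Finset.sum_congr rfl
    intro k _; ring
  rw [h4]
  simp [Nat.choose_zero_right]
  ring

lemma ML : ∀ (n a c : ℕ),
    ∑ k ∈ range (n + 1), (-1 : ℝ) ^ k * (n.choose k) * ((a + k).factorial / (c + k).factorial)
      = ((a.factorial : ℝ) / c.factorial) *
          ∏ i ∈ range n, (((c : ℝ) - a + i) / ((c : ℝ) + 1 + i)) := by
  intro n
  induction n with
  | zero => intro a c; simp
  | succ n IH =>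
    intro a c
    rw [show n + 1 + 1 = n + 2 from rfl,
      alt_pascal n (fun k => ((a + k).factorial : ℝ) / (c + k).factorial)]
    have hg : (∑ k ∈ range (n+1), (-1:ℝ)^k * (n.choose k) * (((a + (k+1)).factorial : ℝ) / (c + (k+1)).factorial))
        = ∑ k ∈ range (n+1), (-1:ℝ)^k * (n.choose k) * ((((a+1) + k).factorial : ℝ) / ((c+1) + k).factorial) := by
      apply Finset.sum_congr rfl
      intro k _
      rw [show a + (k+1) = (a+1) + k by omega, show c + (k+1) = (c+1) + k by omega]
    rw [hg, IH a c, IH (a+1) (c+1)]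
    -- now pure algebra
    have hc : ∀ i ∈ range n, (((c+1:ℕ) : ℝ) - ((a+1:ℕ)) + i) / (((c+1:ℕ) : ℝ) + 1 + i)
        = ((c:ℝ) - a + i) / ((c:ℝ) + 2 + i) := by
      intro i _
      push_cast; ring_nf
    rw [Finset.prod_congr rfl hc]
    rw [Finset.prod_div_distrib, Finset.prod_div_distrib, Finset.prod_div_distrib]
    set PN := ∏ i ∈ range n, ((c:ℝ) - a + i) with hPN
    have hPN1 : ∏ i ∈ range (n+1), ((c:ℝ) - a + i) = PN * ((c:ℝ) - a + n) := by
      rw [Finset.prod_range_succ]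
    set D1 := ∏ i ∈ range n, ((c:ℝ) + 1 + i) with hD1
    set D2 := ∏ i ∈ range n, ((c:ℝ) + 2 + i) with hD2
    have hD1' : ∏ i ∈ range (n+1), ((c:ℝ) + 1 + i) = D1 * ((c:ℝ) + 1 + n) := by
      rw [Finset.prod_range_succ]
    rw [hPN1, hD1']
    have key : D1 * ((c:ℝ) + 1 + n) = ((c:ℝ) + 1) * D2 := by
      rw [hD1, ← Finset.prod_range_succ (fun i => (c:ℝ) + 1 + i) n,
        Finset.prod_range_succ' (fun i => (c:ℝ) + 1 + i) n]
      rw [hD2]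
      have : ∀ i ∈ range n, ((c:ℝ) + 1 + ((i:ℕ)+1 : ℕ)) = ((c:ℝ) + 2 + i) := by
        intro i _; push_cast; ring
      rw [Finset.prod_congr rfl this]
      push_cast; ring
    have hD1pos : (0:ℝ) < D1 := Finset.prod_pos (fun i _ => by positivity)
    have hD2pos : (0:ℝ) < D2 := Finset.prod_pos (fun i _ => by positivity)
    have hcf : ((c.factorial : ℝ)) ≠ 0 := by positivity
    have hfa : (((a+1).factorial : ℝ)) = ((a:ℝ)+1) * a.factorial := by
      rw [Nat.factorial_succ]; push_cast; ring
    have hfc : (((c+1).factorial : ℝ)) = ((c:ℝ)+1) * c.factorial := by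
      rw [Nat.factorial_succ]; push_cast; ring
    rw [hfa, hfc]
    have h1 : ((c:ℝ)+1) ≠ 0 := by positivity
    have h2 : ((c:ℝ)+1+n) ≠ 0 := by positivity
    have hD2eq : D2 = D1 * ((c:ℝ)+1+n) / ((c:ℝ)+1) := by
      field_simp
      linarith [key]
    rw [hD2eq]
    have hD1ne : D1 ≠ 0 := ne_of_gt hD1pos
    field_simp
    ring

lemma prod_cast (m : ℕ) : ∀ n : ℕ, ∏ j ∈ range n, ((m:ℝ) + 1 + j) = (m+n).factorial / m.factorial := by
  intro n
  induction n with
  | zero => simp [div_self (show (m.factorial:ℝ) ≠ 0 by positivity)]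
  | succ n IH =>
    rw [Finset.prod_range_succ, IH]
    have : ((m+(n+1)).factorial : ℝ) = ((m:ℝ)+1+n) * (m+n).factorial := by
      rw [show m + (n+1) = (m+n) + 1 by omega, Nat.factorial_succ]
      push_cast; ring
    rw [this]
    have : ((m.factorial : ℝ)) ≠ 0 := by positivity
    field_simp

lemma prod_neg (m : ℕ) : ∀ n : ℕ, n ≤ m → ∏ j ∈ range n, ((j:ℝ) - m) = (-1)^n * (m.factorial / (m-n).factorial) := by
  intro n
  induction n with
  | zero => simp [div_self (show (m.factorial:ℝ) ≠ 0 by positivity)]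
  | succ n IH =>
    intro h
    rw [Finset.prod_range_succ, IH (by omega)]
    have hp : (((m - (n+1)) : ℕ) : ℝ) = (m:ℝ) - n - 1 := by
      have := Nat.cast_sub (show n+1 ≤ m by omega) (R := ℝ)
      push_cast at this ⊢
      linarith
    have h1 : ((m - n).factorial : ℝ) = ((m:ℝ) - n) * ((m - (n+1)).factorial : ℝ) := by
      rw [show m - n = (m - (n+1)) + 1 by omega, Nat.factorial_succ]
      push_cast
      rw [hp]; ring
    rw [h1]
    have h2 : ((m:ℝ) - n) ≠ 0 := by
      have : (n:ℝ) + 1 ≤ m := by exact_mod_cast Nat.cast_le.mpr h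
      linarith
    have h3 : (((m - (n+1)).factorial : ℝ)) ≠ 0 := by positivity
    field_simp
    ring

lemma beta_sum (k c : ℕ) :
    ∑ j ∈ range (k+1), (-1:ℝ)^j * (k.choose j) * (1/((j:ℝ)+c+1))
      = k.factorial * c.factorial / (k+c+1).factorial := by
  have h := ML k c (c+1)
  have h1 : ∀ j ∈ range (k+1), (-1:ℝ)^j * (k.choose j) * (((c + j).factorial : ℝ) / ((c+1) + j).factorial)
      = (-1:ℝ)^j * (k.choose j) * (1/((j:ℝ)+c+1)) := by
    intro j _
    have : (((c+1) + j).factorial : ℝ) = ((j:ℝ)+c+1) * ((c+j).factorial : ℝ) := by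
      rw [show (c+1)+j = (c+j)+1 by omega, Nat.factorial_succ]
      push_cast; ring
    rw [this]
    have h2 : ((c+j).factorial : ℝ) ≠ 0 := by positivity
    have h3 : ((j:ℝ)+c+1) ≠ 0 := by positivity
    field_simp
  rw [← Finset.sum_congr rfl h1, h]
  have h4 : ∀ i ∈ range k, (((c+1:ℕ) : ℝ) - c + i) / (((c+1:ℕ) : ℝ) + 1 + i)
      = (((0:ℕ):ℝ) + 1 + i) / (((c+1:ℕ):ℝ) + 1 + i) := by
    intro i _; norm_num
  rw [Finset.prod_congr rfl h4, Finset.prod_div_distrib, prod_cast 0 k, prod_cast (c+1) k]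
  have e1 : ((c+1).factorial : ℝ) = ((c:ℝ)+1) * c.factorial := by
    rw [Nat.factorial_succ]; push_cast; ring
  have e2 : (((c+1)+k).factorial : ℝ) = ((k+c+1).factorial : ℝ) := by
    norm_num [show (c+1)+k = k+c+1 by omega]
  rw [e1, e2]
  have : ((c.factorial : ℝ)) ≠ 0 := by positivity
  have : (((k+c+1).factorial : ℝ)) ≠ 0 := by positivity
  have : ((c:ℝ)+1) ≠ 0 := by positivity
  field_simp
  ring

lemma integral_one_add_pow (m : ℕ) : ∫ x in (-1:ℝ)..1, (1+x)^m = 2^(m+1)/((m:ℝ)+1) := by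
  have h := intervalIntegral.integral_comp_add_left (fun x => x^m) (1:ℝ) (a := (-1:ℝ)) (b := 1)
  rw [h]
  norm_num [integral_pow]

lemma J_integral (k c : ℕ) : ∫ x in (-1:ℝ)..1, (x-1)^k * (1+x)^c
    = (-1:ℝ)^k * 2^(k+c+1) * k.factorial * c.factorial / ((k+c+1).factorial) := by
  have hexp : ∀ x : ℝ, (x-1)^k * (1+x)^c
      = ∑ j ∈ range (k+1), (k.choose j : ℝ) * (-2)^(k-j) * (1+x)^(j+c) := by
    intro x
    have : (x - 1) = (1+x) + (-2) := by ring
    rw [this, add_pow]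
    rw [Finset.sum_mul]
    apply Finset.sum_congr rfl
    intro j _
    rw [pow_add]
    ring
  rw [intervalIntegral.integral_congr (g := fun x => ∑ j ∈ range (k+1), (k.choose j : ℝ) * (-2)^(k-j) * (1+x)^(j+c)) (fun x _ => hexp x)]
  rw [intervalIntegral.integral_finset_sum]
  swap
  · intro j _
    apply Continuous.intervalIntegrable
    continuity
  have : ∀ j ∈ range (k+1), (∫ x in (-1:ℝ)..1, (k.choose j : ℝ) * (-2)^(k-j) * (1+x)^(j+c))
      = ((-1:ℝ)^k * 2^(k+c+1)) * ((-1:ℝ)^j * (k.choose j) * (1/((j:ℝ)+c+1))) := by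
    intro j hj
    rw [intervalIntegral.integral_const_mul, integral_one_add_pow]
    have hj' : j ≤ k := by simp at hj; omega
    have hsplit : (-2:ℝ)^(k-j) = (-1)^(k-j) * 2^(k-j) := by
      rw [← neg_one_mul, mul_pow]
    rw [hsplit]
    have h1 : (-1:ℝ)^(k-j) = (-1:ℝ)^k * (-1:ℝ)^j := by
      have e : (-1:ℝ)^k = (-1)^(k-j) * (-1)^j := by
        rw [← pow_add, Nat.sub_add_cancel hj']
      rw [e, mul_assoc, ← mul_pow]
      norm_num
    have h2 : (2:ℝ)^(k-j) * 2^(j+c+1) = 2^(k+c+1) := by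
      rw [← pow_add]
      congr 1
      omega
    have h3 : ((j+c:ℕ):ℝ)+1 = (j:ℝ)+c+1 := by push_cast; ring
    rw [h3, h1, ← h2]
    ring
  rw [Finset.sum_congr rfl this, ← Finset.mul_sum, beta_sum k c]
  ring

lemma jacobi_poly (b n : ℕ) : jacobiP 0 (b:ℝ) n
    = Polynomial.C (1/(((n+b).factorial : ℝ))) *
      ∑ k ∈ range (n+1),
        Polynomial.C ((n.choose k : ℝ) * ((n+k+b).factorial : ℝ) / (2^k * k.factorial)) *
          (Polynomial.X - 1)^k := by
  unfold jacobiP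
  congr 1
  · rw [show (n:ℝ) + 0 + 1 = ((n:ℕ):ℝ) + 1 by push_cast; ring, Real.Gamma_nat_eq_factorial,
      show (n:ℝ) + 0 + (b:ℝ) + 1 = (((n+b:ℕ)):ℝ) + 1 by push_cast; ring, Real.Gamma_nat_eq_factorial]
    congr 1
    rw [eq_div_iff (by positivity)]
    field_simp
  · apply Finset.sum_congr rfl
    intro k _
    congr 2
    rw [show (n:ℝ) + (k:ℝ) + 0 + (b:ℝ) + 1 = (((n+k+b:ℕ)):ℝ) + 1 by push_cast; ring,
      Real.Gamma_nat_eq_factorial,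
      show (k:ℝ) + 0 + 1 = ((k:ℕ):ℝ) + 1 by push_cast; ring, Real.Gamma_nat_eq_factorial]

lemma jacobi_eval (b n : ℕ) (x : ℝ) :
    (jacobiP 0 (b:ℝ) n).eval x
      = (1/(((n+b).factorial : ℝ))) *
        ∑ k ∈ range (n+1),
          ((n.choose k : ℝ) * ((n+k+b).factorial : ℝ) / (2^k * k.factorial)) * (x-1)^k := by
  rw [jacobi_poly]
  rw [Polynomial.eval_mul, Polynomial.eval_C, Polynomial.eval_finset_sum]
  congr 1
  apply Finset.sum_congr rfl
  intro k _
  simp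

lemma jacobi_natDegree_le (b n : ℕ) : (jacobiP 0 (b:ℝ) n).natDegree ≤ n := by
  rw [jacobi_poly]
  apply le_trans (Polynomial.natDegree_C_mul_le _ _)
  apply Polynomial.natDegree_sum_le_of_forall_le
  intro k hk
  apply le_trans (Polynomial.natDegree_C_mul_le _ _)
  rw [Polynomial.natDegree_pow]
  have : (Polynomial.X - 1 : Polynomial ℝ).natDegree = 1 := by
    simpa using Polynomial.natDegree_X_sub_C (1:ℝ)
  rw [this, mul_one]
  simp at hk
  omega

lemma jacobi_coeff (b n : ℕ) :
    (jacobiP 0 (b:ℝ) n).coeff n = ((2*n+b).factorial : ℝ) / (2^n * n.factorial * (n+b).factorial) := by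
  rw [jacobi_poly, Polynomial.coeff_C_mul, Polynomial.finset_sum_coeff]
  have hmono : ((Polynomial.X - 1 : Polynomial ℝ)).Monic := by
    simpa using Polynomial.monic_X_sub_C (1:ℝ)
  have hdeg : ∀ k, ((Polynomial.X - 1 : Polynomial ℝ)^k).natDegree = k := by
    intro k
    rw [Polynomial.natDegree_pow]
    have : (Polynomial.X - 1 : Polynomial ℝ).natDegree = 1 := by
      simpa using Polynomial.natDegree_X_sub_C (1:ℝ)
    rw [this, mul_one]
  have hsum : ∑ k ∈ range (n+1),
      (Polynomial.C ((n.choose k : ℝ) * ((n+k+b).factorial : ℝ) / (2^k * k.factorial)) *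
        (Polynomial.X - 1)^k).coeff n
      = ((n.choose n : ℝ) * ((n+n+b).factorial : ℝ) / (2^n * n.factorial)) := by
    rw [Finset.sum_eq_single n]
    · rw [Polynomial.coeff_C_mul]
      have : ((Polynomial.X - 1 : Polynomial ℝ)^n).coeff n = 1 := by
        have := (hmono.pow n).coeff_natDegree
        rwa [hdeg n] at this
      rw [this, mul_one]
    · intro k hk hkn
      rw [Polynomial.coeff_C_mul]
      have : ((Polynomial.X - 1 : Polynomial ℝ)^k).coeff n = 0 := by
        apply Polynomial.coeff_eq_zero_of_natDegree_lt
        rw [hdeg k]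
        simp at hk
        omega
      rw [this, mul_zero]
    · intro h
      exact absurd (Finset.self_mem_range_succ n) h
  rw [hsum, Nat.choose_self]
  rw [show n+n+b = 2*n+b by omega]
  push_cast
  have h1 : ((2*n+b).factorial : ℝ) ≥ 0 := by positivity
  have : ((n+b).factorial : ℝ) ≠ 0 := by positivity
  have : (n.factorial : ℝ) ≠ 0 := by positivity
  have : (2:ℝ)^n ≠ 0 := by positivity
  rw [div_mul_div_comm, one_mul, div_eq_div_iff (by positivity) (by positivity)]
  ring

lemma jacobi_natDegree (b n : ℕ) : (jacobiP 0 (b:ℝ) n).natDegree = n := by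
  have h1 := jacobi_natDegree_le b n
  have h2 : (jacobiP 0 (b:ℝ) n).coeff n ≠ 0 := by
    rw [jacobi_coeff]
    positivity
  have := Polynomial.le_natDegree_of_ne_zero h2
  omega

lemma jacobi_leadingCoeff (b n : ℕ) :
    (jacobiP 0 (b:ℝ) n).leadingCoeff = ((2*n+b).factorial : ℝ) / (2^n * n.factorial * (n+b).factorial) := by
  rw [Polynomial.leadingCoeff, jacobi_natDegree, jacobi_coeff]

noncomputable def KI (n b c : ℕ) : ℝ :=
  2^(c+1)/((c:ℝ)+1) * ∏ i ∈ range n, (((c:ℝ) + 1 + i - n - b) / ((c:ℝ) + 2 + i))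

lemma integral_jacobi (b n c : ℕ) :
    ∫ x in (-1:ℝ)..1, (jacobiP 0 (b:ℝ) n).eval x * (1+x)^c = KI n b c := by
  have hcongr : ∀ x ∈ Set.uIcc (-1:ℝ) 1, (fun x => (jacobiP 0 (b:ℝ) n).eval x * (1+x)^c) x
      = (fun x => (1/(((n+b).factorial : ℝ))) * ∑ k ∈ range (n+1),
          ((n.choose k : ℝ) * ((n+k+b).factorial : ℝ) / (2^k * k.factorial)) * ((x-1)^k * (1+x)^c)) x := by
    intro x _
    simp only [jacobi_eval b n x, Finset.sum_mul, mul_assoc]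
  rw [intervalIntegral.integral_congr hcongr, intervalIntegral.integral_const_mul,
    intervalIntegral.integral_finset_sum]
  swap
  · intro k _
    apply Continuous.intervalIntegrable
    continuity
  have hterm : ∀ k ∈ range (n+1),
      (∫ x in (-1:ℝ)..1, ((n.choose k : ℝ) * ((n+k+b).factorial : ℝ) / (2^k * k.factorial)) * ((x-1)^k * (1+x)^c))
      = (2^(c+1) * (c.factorial : ℝ)) *
          ((-1:ℝ)^k * (n.choose k) * (((n+b) + k).factorial / ((c+1) + k).factorial)) := by
    intro k _
    rw [intervalIntegral.integral_const_mul, J_integral k c]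
    have ei1 : (n+b)+k = n+k+b := by omega
    have ei2 : (c+1)+k = k+c+1 := by omega
    rw [ei1, ei2]
    have h1 : (2:ℝ)^k ≠ 0 := by positivity
    have h2 : (k.factorial : ℝ) ≠ 0 := by positivity
    have h3 : ((k+c+1).factorial : ℝ) ≠ 0 := by positivity
    have h4 : (2:ℝ)^(k+c+1) = 2^k * 2^(c+1) := by
      rw [← pow_add, Nat.add_assoc]
    rw [h4]
    field_simp
  rw [Finset.sum_congr rfl hterm, ← Finset.mul_sum, ML n (n+b) (c+1)]
  have hprod : ∀ i ∈ range n, ((((c+1:ℕ)) : ℝ) - ((n+b:ℕ)) + i) / ((((c+1:ℕ)) : ℝ) + 1 + i)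
      = (((c:ℝ) + 1 + i - n - b) / ((c:ℝ) + 2 + i)) := by
    intro i _
    push_cast
    ring_nf
  rw [Finset.prod_congr rfl hprod]
  unfold KI
  have e1 : (((c+1).factorial : ℝ)) = ((c:ℝ)+1) * c.factorial := by
    rw [Nat.factorial_succ]; push_cast; ring
  rw [e1]
  have : ((n+b).factorial : ℝ) ≠ 0 := by positivity
  have : (c.factorial : ℝ) ≠ 0 := by positivity
  have : ((c:ℝ)+1) ≠ 0 := by positivity
  field_simp

lemma KI_zero (n b c : ℕ) (hbc : b ≤ c) (hc : c + 1 ≤ n + b) : KI n b c = 0 := by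
  unfold KI
  apply mul_eq_zero_of_right
  have hmem : n + b - (c+1) ∈ range n := by
    rw [Finset.mem_range]; omega
  apply Finset.prod_eq_zero hmem
  have hnum : ((c:ℝ) + 1 + ((n + b - (c+1) : ℕ) : ℝ) - n - b) = 0 := by
    rw [Nat.cast_sub hc]
    push_cast
    ring
  rw [hnum, zero_div]

lemma KI_val3 (n : ℕ) : KI n 3 (n+3)
    = 2^(n+4) * (n.factorial : ℝ) * ((n+3).factorial : ℝ) / ((2*n+4).factorial : ℝ) := by
  unfold KI
  have h1 : ∀ i ∈ range n, ((((n+3:ℕ)):ℝ) + 1 + i - n - (((3:ℕ)):ℝ)) / ((((n+3:ℕ)):ℝ) + 2 + i)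
      = (((0:ℕ):ℝ) + 1 + i) / ((((n+4:ℕ)):ℝ) + 1 + i) := by
    intro i _
    push_cast
    ring_nf
  rw [Finset.prod_congr rfl h1, Finset.prod_div_distrib, prod_cast 0 n, prod_cast (n+4) n]
  have e1 : ((n+4+n).factorial : ℝ) = ((2*n+4).factorial : ℝ) := by
    norm_num [show n+4+n = 2*n+4 by omega]
  have e2 : ((n+4).factorial : ℝ) = ((n:ℝ)+4) * ((n+3).factorial : ℝ) := by
    rw [show n+4 = (n+3)+1 by omega, Nat.factorial_succ]; push_cast; ring
  rw [e1, e2]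
  have : ((2*n+4).factorial : ℝ) ≠ 0 := by positivity
  have : ((n+3).factorial : ℝ) ≠ 0 := by positivity
  have : ((n:ℝ)+4) ≠ 0 := by positivity
  have : (((n+3:ℕ)):ℝ) + 1 = (n:ℝ)+4 := by push_cast; ring
  push_cast
  field_simp
  ring

lemma KI_val2 (N : ℕ) : KI N 2 1 = 4 * (-1:ℝ)^N * (N.factorial : ℝ) / ((N+2).factorial : ℝ) := by
  unfold KI
  have h1 : ∀ i ∈ range N, (((1:ℕ):ℝ) + 1 + i - N - (((2:ℕ)):ℝ)) / (((1:ℕ):ℝ) + 2 + i)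
      = ((i:ℝ) - N) / ((((2:ℕ)):ℝ) + 1 + i) := by
    intro i _
    push_cast
    ring_nf
  rw [Finset.prod_congr rfl h1, Finset.prod_div_distrib, prod_neg N N le_rfl, prod_cast 2 N]
  have e1 : ((2+N).factorial : ℝ) = ((N+2).factorial : ℝ) := by
    rw [show 2+N = N+2 by omega]
  rw [Nat.sub_self, e1]
  have : ((N+2).factorial : ℝ) ≠ 0 := by positivity
  norm_num [Nat.factorial]
  field_simp
  ring

lemma eval_taylor (Q : Polynomial ℝ) (M : ℕ) (h : Q.natDegree ≤ M) (x : ℝ) :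
    Q.eval x = ∑ m ∈ range (M+1), ((Polynomial.taylor (-1) Q).coeff m) * (x+1)^m := by
  have h1 : Q.eval x = (Polynomial.taylor (-1) Q).eval (x+1) := by
    rw [Polynomial.taylor_apply, Polynomial.eval_comp]
    simp
  have h2 : (Polynomial.taylor (-1) Q).natDegree < M + 1 := by
    rw [Polynomial.natDegree_taylor]; omega
  rw [h1, Polynomial.eval_eq_sum_range' h2]

lemma taylor_lead (Q : Polynomial ℝ) :
    (Polynomial.taylor (-1) Q).coeff Q.natDegree = Q.leadingCoeff := by
  by_cases hQ : Q = 0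
  · simp [hQ]
  have h2 : (Polynomial.taylor (-1) Q).leadingCoeff = Q.leadingCoeff := by
    rw [Polynomial.taylor_apply,
      Polynomial.leadingCoeff_comp (by rw [Polynomial.natDegree_X_add_C]; norm_num),
      Polynomial.leadingCoeff_X_add_C, one_pow, mul_one]
  conv_lhs => rw [← Polynomial.natDegree_taylor Q (-1)]
  rw [← Polynomial.leadingCoeff, h2]

lemma reduce (Q : Polynomial ℝ) (b n c M : ℕ) (hM : Q.natDegree ≤ M) :
    (∫ x in (-1:ℝ)..1, Q.eval x * ((jacobiP 0 (b:ℝ) n).eval x * (1+x)^c))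
      = ∑ m ∈ range (M+1), ((Polynomial.taylor (-1) Q).coeff m) * KI n b (c+m) := by
  have hcongr : ∀ x ∈ Set.uIcc (-1:ℝ) 1,
      (fun x => Q.eval x * ((jacobiP 0 (b:ℝ) n).eval x * (1+x)^c)) x
      = (fun x => ∑ m ∈ range (M+1),
          ((Polynomial.taylor (-1) Q).coeff m) * ((jacobiP 0 (b:ℝ) n).eval x * (1+x)^(c+m))) x := by
    intro x _
    simp only
    rw [eval_taylor Q M hM x, Finset.sum_mul]
    apply Finset.sum_congr rfl
    intro m _
    rw [pow_add]
    ring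
  rw [intervalIntegral.integral_congr hcongr, intervalIntegral.integral_finset_sum]
  swap
  · intro m _
    apply Continuous.intervalIntegrable
    exact (continuous_const.mul ((jacobiP 0 (b:ℝ) n).continuous.mul
      ((continuous_const.add continuous_id).pow _)))
  apply Finset.sum_congr rfl
  intro m _
  rw [intervalIntegral.integral_const_mul, integral_jacobi]

lemma jacobi_eval_neg_one (N : ℕ) :
    (jacobiP 0 ((2:ℕ):ℝ) N).eval (-1) = (-1:ℝ)^N * ((N+2).factorial : ℝ) / (2 * N.factorial) := by
  rw [jacobi_eval]
  have h1 : ∀ k ∈ range (N+1),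
      ((N.choose k : ℝ) * ((N+k+2).factorial : ℝ) / (2^k * k.factorial)) * ((-1:ℝ)-1)^k
      = (-1:ℝ)^k * (N.choose k) * ((((N+2)+k).factorial : ℝ) / ((0+k).factorial : ℝ)) := by
    intro k _
    rw [show N+k+2 = (N+2)+k by omega, show 0+k = k by omega,
      show ((-1:ℝ)-1) = (-1)*2 by norm_num, mul_pow]
    have : (2:ℝ)^k ≠ 0 := by positivity
    have : (k.factorial : ℝ) ≠ 0 := by positivity
    field_simp
  rw [Finset.sum_congr rfl h1, ML N (N+2) 0]
  have h4 : ∀ i ∈ range N, (((0:ℕ):ℝ) - ((N+2:ℕ):ℝ) + i) / (((0:ℕ):ℝ) + 1 + i)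
      = ((i:ℝ) - ((N+2:ℕ):ℝ)) / (((0:ℕ):ℝ) + 1 + i) := by
    intro i _
    norm_num
    ring_nf
  rw [Finset.prod_congr rfl h4, Finset.prod_div_distrib, prod_neg (N+2) N (by omega), prod_cast 0 N]
  have e1 : ((N+2) - N) = 2 := by omega
  rw [e1]
  have : (N.factorial : ℝ) ≠ 0 := by positivity
  have : ((N+2).factorial : ℝ) ≠ 0 := by positivity
  norm_num [Nat.factorial]
  field_simp

/-- The family `{Φ_i}_{i=0}^N` is orthogonal in the inner product
`(u,v) ↦ ∫_{−1}^1 u v (1+x) dx`, with `‖Φ_i‖² = 8/(i+2)` for `i ≤ N−1` and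
`‖Φ_N‖² = 2`. -/

theorem Phi_orthogonality (N : ℕ) (hN : 1 ≤ N) :
    (∀ i ≤ N, ∀ j ≤ N, i ≠ j →
      (∫ x in (-1:ℝ)..1, (Phi N i).eval x * (Phi N j).eval x * (1 + x)) = 0) ∧
    (∀ i < N,
      (∫ x in (-1:ℝ)..1, (Phi N i).eval x ^ 2 * (1 + x)) = 8 / ((i : ℝ) + 2)) ∧
    (∫ x in (-1:ℝ)..1, (Phi N N).eval x ^ 2 * (1 + x)) = 2 := by
  have hb3 : (3:ℝ) = ((3:ℕ):ℝ) := by norm_num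
  have hb2 : (2:ℝ) = ((2:ℕ):ℝ) := by norm_num
  -- commutation of the integrand
  have comm : ∀ p q : Polynomial ℝ,
      (∫ x in (-1:ℝ)..1, p.eval x * q.eval x * (1+x))
        = ∫ x in (-1:ℝ)..1, q.eval x * p.eval x * (1+x) := by
    intro p q
    apply intervalIntegral.integral_congr
    intro x _
    ring
  have key33 : ∀ i j : ℕ, i < j →
      (∫ x in (-1:ℝ)..1, ((Polynomial.X+1) * jacobiP 0 3 i).eval x *
        ((Polynomial.X+1) * jacobiP 0 3 j).eval x * (1+x)) = 0 := by
    intro i j hij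
    have hc : ∀ x ∈ Set.uIcc (-1:ℝ) 1,
        (fun x => ((Polynomial.X+1) * jacobiP 0 3 i).eval x *
          ((Polynomial.X+1) * jacobiP 0 3 j).eval x * (1+x)) x
        = (fun x => (jacobiP 0 ((3:ℕ):ℝ) i).eval x *
            ((jacobiP 0 ((3:ℕ):ℝ) j).eval x * (1+x)^3)) x := by
      intro x _
      simp only [hb3, Polynomial.eval_mul, Polynomial.eval_add, Polynomial.eval_X,
        Polynomial.eval_one]
      ring
    rw [intervalIntegral.integral_congr hc, reduce _ 3 j 3 i (jacobi_natDegree_le 3 i)]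
    apply Finset.sum_eq_zero
    intro m hm
    simp only [Finset.mem_range] at hm
    rw [KI_zero j 3 (3+m) (by omega) (by omega), mul_zero]
  have key32 : ∀ i : ℕ, i < N →
      (∫ x in (-1:ℝ)..1, ((Polynomial.X+1) * jacobiP 0 3 i).eval x *
        (jacobiP 0 2 N).eval x * (1+x)) = 0 := by
    intro i hi
    have hc : ∀ x ∈ Set.uIcc (-1:ℝ) 1,
        (fun x => ((Polynomial.X+1) * jacobiP 0 3 i).eval x *
          (jacobiP 0 2 N).eval x * (1+x)) x
        = (fun x => (jacobiP 0 ((3:ℕ):ℝ) i).eval x *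
            ((jacobiP 0 ((2:ℕ):ℝ) N).eval x * (1+x)^2)) x := by
      intro x _
      simp only [hb3, hb2, Polynomial.eval_mul, Polynomial.eval_add, Polynomial.eval_X,
        Polynomial.eval_one]
      ring
    rw [intervalIntegral.integral_congr hc, reduce _ 2 N 2 i (jacobi_natDegree_le 3 i)]
    apply Finset.sum_eq_zero
    intro m hm
    simp only [Finset.mem_range] at hm
    rw [KI_zero N 2 (2+m) (by omega) (by omega), mul_zero]
  refine ⟨?_, ?_, ?_⟩
  · -- orthogonality
    intro i hi j hj hij
    by_cases hiN : i = N
    · have hjN : j ≠ N := by omega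
      have hjlt : j < N := by omega
      simp only [Phi, if_pos hiN, if_neg hjN, hiN]
      rw [comm]
      exact key32 j hjlt
    · by_cases hjN : j = N
      · have hilt : i < N := by omega
        simp only [Phi, if_neg hiN, if_pos hjN, hjN]
        exact key32 i hilt
      · simp only [Phi, if_neg hiN, if_neg hjN]
        rcases lt_or_gt_of_ne hij with h | h
        · exact key33 i j h
        · rw [comm]
          exact key33 j i h
  · -- norms for i < N
    intro i hi
    have hiN : i ≠ N := by omega
    simp only [Phi, if_neg hiN]
    have hc : ∀ x ∈ Set.uIcc (-1:ℝ) 1,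
        (fun x => ((Polynomial.X+1) * jacobiP 0 3 i).eval x ^ 2 * (1+x)) x
        = (fun x => (jacobiP 0 ((3:ℕ):ℝ) i).eval x *
            ((jacobiP 0 ((3:ℕ):ℝ) i).eval x * (1+x)^3)) x := by
      intro x _
      simp only [hb3, Polynomial.eval_mul, Polynomial.eval_add, Polynomial.eval_X,
        Polynomial.eval_one]
      ring
    rw [intervalIntegral.integral_congr hc, reduce _ 3 i 3 i (jacobi_natDegree_le 3 i),
      Finset.sum_range_succ]
    have hz : ∑ m ∈ range i, ((Polynomial.taylor (-1) (jacobiP 0 ((3:ℕ):ℝ) i)).coeff m)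
        * KI i 3 (3+m) = 0 := by
      apply Finset.sum_eq_zero
      intro m hm
      simp only [Finset.mem_range] at hm
      rw [KI_zero i 3 (3+m) (by omega) (by omega), mul_zero]
    rw [hz, zero_add]
    have hco : (Polynomial.taylor (-1) (jacobiP 0 ((3:ℕ):ℝ) i)).coeff i
        = ((2*i+3).factorial : ℝ)/(2^i * i.factorial * (i+3).factorial) := by
      have h := taylor_lead (jacobiP 0 ((3:ℕ):ℝ) i)
      rw [jacobi_natDegree 3 i] at h
      rw [h, jacobi_leadingCoeff 3 i]
    rw [hco, show 3+i = i+3 by omega, KI_val3 i]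
    have e1 : ((2*i+4).factorial : ℝ) = ((2:ℝ)*i+4) * ((2*i+3).factorial : ℝ) := by
      rw [show 2*i+4 = (2*i+3)+1 by omega, Nat.factorial_succ]
      push_cast
      ring
    have e2 : (2:ℝ)^(i+4) = 2^i * 16 := by
      rw [pow_add]
      norm_num
    rw [e1, e2]
    have h1 : (i.factorial : ℝ) ≠ 0 := by positivity
    have h2 : ((i+3).factorial : ℝ) ≠ 0 := by positivity
    have h3 : ((2*i+3).factorial : ℝ) ≠ 0 := by positivity
    have h4 : (2:ℝ)^i ≠ 0 := by positivity
    have h5 : ((2:ℝ)*i+4) ≠ 0 := by positivity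
    have h6 : ((i:ℝ)+2) ≠ 0 := by positivity
    field_simp
    ring
  · -- norm of Phi N N
    rw [show Phi N N = jacobiP 0 2 N by unfold Phi; simp]
    have hc : ∀ x ∈ Set.uIcc (-1:ℝ) 1,
        (fun x => (jacobiP 0 2 N).eval x ^ 2 * (1+x)) x
        = (fun x => (jacobiP 0 ((2:ℕ):ℝ) N).eval x *
            ((jacobiP 0 ((2:ℕ):ℝ) N).eval x * (1+x)^1)) x := by
      intro x _
      simp only [hb2]
      ring
    rw [intervalIntegral.integral_congr hc, reduce _ 2 N 1 N (jacobi_natDegree_le 2 N),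
      Finset.sum_range_succ' (fun m => ((Polynomial.taylor (-1) (jacobiP 0 ((2:ℕ):ℝ) N)).coeff m) * KI N 2 (1+m)) N]
    have hz : ∑ m ∈ range N, ((Polynomial.taylor (-1) (jacobiP 0 ((2:ℕ):ℝ) N)).coeff (m+1))
        * KI N 2 (1+(m+1)) = 0 := by
      apply Finset.sum_eq_zero
      intro m hm
      simp only [Finset.mem_range] at hm
      rw [KI_zero N 2 (1+(m+1)) (by omega) (by omega), mul_zero]
    rw [hz, zero_add]
    have hco : (Polynomial.taylor (-1) (jacobiP 0 ((2:ℕ):ℝ) N)).coeff 0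
        = (-1:ℝ)^N * ((N+2).factorial : ℝ) / (2 * N.factorial) := by
      rw [Polynomial.taylor_coeff_zero, jacobi_eval_neg_one]
    rw [show (1+0) = 1 by omega, hco, KI_val2 N]
    have h1 : (N.factorial : ℝ) ≠ 0 := by positivity
    have h2 : ((N+2).factorial : ℝ) ≠ 0 := by positivity
    have hsq : (-1:ℝ)^N * (-1:ℝ)^N = 1 := by
      rw [← pow_add]
      exact Even.neg_one_pow ⟨N, rfl⟩
    field_simp
    linear_combination 4 * hsq
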